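/- Let τ > 0, let X be a separable reflexive real Banach space and U a real separable Hilbert space, let B : U → X be a bounded linear operator, let R(t,s) ∈ L(X) (0 ≤ s ≤ t ≤ τ) be a strongly continuous, uniformly bounded family of bounded linear operators, and fix x₀ ∈ X. Define B_τ : X* → X by B_τ x* = ∫₀^τ R(τ,t) B B* R(τ,t)* x* dt. Then the following are equivalent: (i) the set {R(τ,0)x₀ + ∫₀^τ R(τ,s)Bu(s)ds : u ∈ L²([0,τ];U)} is dense in X (approximate controllability of the linear system on [0,τ]); (ii) ⟨x*, B_τ x*⟩ > 0 for every nonzero x* ∈ X*. -/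

import Mathlib

open MeasureTheory
open scoped RealInnerProductSpace

/-- Indicator of a function continuous on a measurable set is measurable, provided the
relative topology argument works; we prove it directly. -/
private lemma aux_indicator_meas {S : Set ℝ} (hS : MeasurableSet S)
    {f : ℝ → ℝ} (hf : ContinuousOn f S) : Measurable (S.indicator f) := by
  apply measurable_of_isOpen
  intro O hO
  obtain ⟨V, hV, hVeq⟩ := continuousOn_iff'.1 hf O hO
  have hset : S.indicator f ⁻¹' O = (V ∩ S) ∪ {t | t ∉ S ∧ (0:ℝ) ∈ O} := by
    ext t
    simp only [Set.mem_preimage, Set.mem_union, Set.mem_inter_iff, Set.mem_setOf_eq]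
    by_cases ht : t ∈ S
    · rw [Set.indicator_of_mem ht]
      constructor
      · intro h
        have h2 : t ∈ f ⁻¹' O ∩ S := ⟨h, ht⟩
        rw [hVeq] at h2
        exact Or.inl ⟨h2.1, ht⟩
      · rintro (⟨hV', _⟩ | ⟨hns, _⟩)
        · have h2 : t ∈ V ∩ S := ⟨hV', ht⟩
          rw [← hVeq] at h2
          exact h2.1
        · exact absurd ht hns
    · rw [Set.indicator_of_notMem ht]
      constructor
      · intro h
        exact Or.inr ⟨ht, h⟩
      · rintro (⟨_, hts⟩ | ⟨_, h0⟩)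
        · exact absurd hts ht
        · exact h0
  rw [hset]
  refine (hV.measurableSet.inter hS).union ?_
  by_cases h0 : (0:ℝ) ∈ O
  · have : {t : ℝ | t ∉ S ∧ (0:ℝ) ∈ O} = Sᶜ := by ext t; simp [h0]
    rw [this]; exact hS.compl
  · have : {t : ℝ | t ∉ S ∧ (0:ℝ) ∈ O} = ∅ := by ext t; simp [h0]
    rw [this]; exact MeasurableSet.empty

/-- A weakly measurable function into a separable Hilbert space is strongly measurable
(Pettis measurability theorem, real separable Hilbert case). -/
private lemma aux_pettis {α : Type*} [MeasurableSpace α] {U : Type*} [NormedAddCommGroup U]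
    [InnerProductSpace ℝ U] [TopologicalSpace.SeparableSpace U]
    {g : α → U} (hg : ∀ y : U, Measurable fun a => ⟪g a, y⟫) :
    StronglyMeasurable g := by
  haveI : SecondCountableTopology U := UniformSpace.secondCountable_of_separable U
  haveI : Nonempty U := ⟨0⟩
  set d : ℕ → U := TopologicalSpace.denseSeq U with hd
  have hdd : DenseRange d := TopologicalSpace.denseRange_denseSeq U
  set e : ℕ → U := fun n => if ‖d n‖ < 1 then d n else 0 with he
  have hebd : ∀ n, ‖e n‖ ≤ 1 := by
    intro n
    by_cases h : ‖d n‖ < 1 <;> simp only [he, h, if_true, if_false]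
    · exact h.le
    · simp
  have hkey : ∀ v : U, (⨆ n, ⟪v, e n⟫) = ‖v‖ := by
    intro v
    have hub : ∀ n, ⟪v, e n⟫ ≤ ‖v‖ := fun n =>
      (real_inner_le_norm _ _).trans (mul_le_of_le_one_right (norm_nonneg v) (hebd n))
    have hbdd : BddAbove (Set.range fun n => ⟪v, e n⟫) := by
      refine ⟨‖v‖, ?_⟩
      rintro _ ⟨n, rfl⟩
      exact hub n
    refine le_antisymm (ciSup_le hub) ?_
    rcases eq_or_ne v 0 with rfl | hv
    · have h0 : ⟪(0:U), e 0⟫ = 0 := inner_zero_left _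
      calc ‖(0:U)‖ = ⟪(0:U), e 0⟫ := by rw [h0, norm_zero]
        _ ≤ ⨆ n, ⟪(0:U), e n⟫ := le_ciSup hbdd 0
    · refine le_of_forall_lt fun cc hcc => ?_
      have hnv : 0 < ‖v‖ := norm_pos_iff.2 hv
      set εv : ℝ := ‖v‖ - cc with hεv
      have hεvpos : 0 < εv := sub_pos.2 hcc
      set δ : ℝ := min (εv / (2 * ‖v‖)) (1/2) with hδ
      have hδ0 : 0 < δ := lt_min (div_pos hεvpos (by positivity)) one_half_pos
      have hδle : δ ≤ εv / (2 * ‖v‖) := min_le_left _ _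
      have hδhalf : δ ≤ 1/2 := min_le_right _ _
      set w : U := ((1 - δ)/‖v‖) • v with hw
      have hwnorm : ‖w‖ = 1 - δ := by
        rw [hw, norm_smul, Real.norm_eq_abs,
          abs_of_nonneg (div_nonneg (by linarith : (0:ℝ) ≤ 1 - δ) (norm_nonneg v)),
          div_mul_cancel₀ _ (ne_of_gt hnv)]
      obtain ⟨n, hn⟩ := Metric.denseRange_iff.1 hdd w (δ/2) (by positivity)
      -- hn : dist w (d n) < δ/2
      have hdw : ‖d n - w‖ < δ/2 := by
        rw [← dist_eq_norm, dist_comm]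
        exact hn
      have hdn1 : ‖d n‖ < 1 := by
        calc ‖d n‖ = ‖w + (d n - w)‖ := by congr 1; abel
          _ ≤ ‖w‖ + ‖d n - w‖ := norm_add_le _ _
          _ < (1 - δ) + δ/2 := by rw [hwnorm]; linarith
          _ ≤ 1 := by linarith
      have hen : e n = d n := if_pos hdn1
      have hinner1 : ⟪v, w⟫ = (1 - δ) * ‖v‖ := by
        rw [hw, real_inner_smul_right, real_inner_self_eq_norm_sq]
        field_simp
      have hinner2 : -(‖v‖ * (δ/2)) ≤ ⟪v, d n - w⟫ := by
        have habs : |⟪v, d n - w⟫| ≤ ‖v‖ * ‖d n - w‖ := abs_real_inner_le_norm _ _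
        have h1 : ‖v‖ * ‖d n - w‖ ≤ ‖v‖ * (δ/2) := by
          apply mul_le_mul_of_nonneg_left hdw.le (norm_nonneg v)
        have := (abs_le.1 habs).1
        linarith
      have hinner : cc < ⟪v, e n⟫ := by
        rw [hen]
        have hsum : ⟪v, d n⟫ = ⟪v, w⟫ + ⟪v, d n - w⟫ := by
          rw [← inner_add_right]
          congr 1
          abel
        have hδv : δ * ‖v‖ ≤ εv / 2 := by
          have := mul_le_mul_of_nonneg_right hδle (le_of_lt hnv)
          calc δ * ‖v‖ ≤ (εv / (2 * ‖v‖)) * ‖v‖ := this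
            _ = εv / 2 := by field_simp
        rw [hsum, hinner1]
        nlinarith
      exact hinner.trans_le (le_ciSup hbdd n)
  have hdist : ∀ x : U, Measurable fun a => dist (g a) x := by
    intro x
    have heq : (fun a => dist (g a) x) = fun a => ⨆ n, (⟪g a, e n⟫ - ⟪x, e n⟫) := by
      ext a
      rw [dist_eq_norm, ← hkey (g a - x)]
      congr 1
      ext n
      rw [inner_sub_left]
    rw [heq]
    exact Measurable.iSup fun n => (hg (e n)).sub measurable_const
  letI : MeasurableSpace U := borel U
  haveI : BorelSpace U := ⟨rfl⟩
  have hmg : Measurable g := by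
    apply measurable_of_isOpen
    intro O hO
    rcases Set.eq_empty_or_nonempty Oᶜ with hOc | hOc
    · have : O = Set.univ := by rwa [Set.compl_empty_iff] at hOc
      simp [this]
    · obtain ⟨t, htO, htc, htd⟩ :=
        (TopologicalSpace.IsSeparable.of_separableSpace Oᶜ).exists_countable_dense_subset
      have htne : t.Nonempty := by
        rcases hOc with ⟨z, hz⟩
        rcases Set.eq_empty_or_nonempty t with rfl | h
        · simpa using htd hz
        · exact h
      haveI := htc.to_subtype
      haveI : Nonempty t := htne.to_subtype
      have hclos : closure t = Oᶜ :=
        subset_antisymm (closure_minimal htO hO.isClosed_compl) htd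
      have hpre : g ⁻¹' O = {a | 0 < ⨅ y : t, dist (g a) (y : U)} := by
        ext a
        have h1 : (⨅ y : t, dist (g a) (y : U)) = Metric.infDist (g a) t :=
          (Metric.infDist_eq_iInf).symm
        rw [Set.mem_preimage, Set.mem_setOf_eq, h1, ← Metric.infDist_closure, hclos]
        rw [← hO.isClosed_compl.notMem_iff_infDist_pos hOc]
        simp
      rw [hpre]
      have hmi : Measurable fun a => ⨅ y : t, dist (g a) (y : U) :=
        Measurable.iInf fun y => hdist (y : U)
      exact measurableSet_lt measurable_const hmi
  exact hmg.stronglyMeasurable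

/-- Applying a strongly-continuous-on-`S` family of operators to a measurable function
yields a measurable function. -/
private lemma aux_apply_meas {X Y : Type*} [NormedAddCommGroup X] [NormedSpace ℝ X]
    [NormedAddCommGroup Y] [NormedSpace ℝ Y]
    {S : Set ℝ} (hS : MeasurableSet S)
    (T : ℝ → X →L[ℝ] Y) (hT : ∀ x, ContinuousOn (fun s => T s x) S)
    {f : ℝ → X} (hf : AEStronglyMeasurable f ((volume : Measure ℝ).restrict S)) :
    AEStronglyMeasurable (fun s => T s (f s)) ((volume : Measure ℝ).restrict S) := by
  have hsimple : ∀ ψ : SimpleFunc ℝ X,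
      AEStronglyMeasurable (fun s => T s (ψ s)) ((volume : Measure ℝ).restrict S) := by
    intro ψ
    refine SimpleFunc.induction ?_ ?_ ψ
    · intro c A hA
      have h1 : AEStronglyMeasurable (fun s => T s c) ((volume : Measure ℝ).restrict S) :=
        (hT c).aestronglyMeasurable hS
      have h0 : (fun s => T s ((SimpleFunc.piecewise A hA (SimpleFunc.const ℝ c)
          (SimpleFunc.const ℝ 0)) s)) = A.indicator (fun s => T s c) := by
        ext s
        by_cases hs : s ∈ A <;>
          simp [SimpleFunc.coe_piecewise, Set.piecewise, hs, Set.indicator_of_mem,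
            Set.indicator_of_notMem]
      rw [h0]
      exact h1.indicator hA
    · intro ψ₁ ψ₂ _ h1 h2
      have heq : (fun s => T s ((ψ₁ + ψ₂) s)) = fun s => T s (ψ₁ s) + T s (ψ₂ s) := by
        ext s
        simp [map_add]
      rw [heq]
      exact h1.add h2
  rcases hf with ⟨f', hf', hff'⟩
  have hmn : ∀ n, AEStronglyMeasurable (fun s => T s (hf'.approx n s))
      ((volume : Measure ℝ).restrict S) := fun n => hsimple _
  have hlim : AEStronglyMeasurable (fun s => T s (f' s)) ((volume : Measure ℝ).restrict S) :=
    aestronglyMeasurable_of_tendsto_ae Filter.atTop hmn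
      (Filter.Eventually.of_forall fun s =>
        ((T s).continuous.tendsto _).comp (hf'.tendsto_approx s))
  refine hlim.congr ?_
  filter_upwards [hff'] with s hs
  rw [hs]

/-- the linear system is approximately controllable on `[0,τ]`
(the reachable set is dense in `X`) iff `⟨x*, B_τ x*⟩ > 0` for every nonzero `x* ∈ X*`. -/
theorem stmt_8
    {X U : Type*} [NormedAddCommGroup X] [NormedSpace ℝ X] [CompleteSpace X]
    [TopologicalSpace.SeparableSpace X]
    [NormedAddCommGroup U] [InnerProductSpace ℝ U] [CompleteSpace U]
    [TopologicalSpace.SeparableSpace U]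
    -- X is reflexive
    (hrefl : Function.Surjective (NormedSpace.inclusionInDoubleDual ℝ X))
    (τ : ℝ) (hτ : 0 < τ)
    (B : U →L[ℝ] X)
    (R : ℝ → ℝ → X →L[ℝ] X)
    -- strong continuity of (t,s) ↦ R(t,s)x on the triangle 0 ≤ s ≤ t ≤ τ
    (hR_strong : ∀ x : X, ContinuousOn (fun p : ℝ × ℝ => R p.1 p.2 x)
      {p : ℝ × ℝ | 0 ≤ p.2 ∧ p.2 ≤ p.1 ∧ p.1 ≤ τ})
    -- uniform boundedness in operator norm
    (MR : ℝ) (hMR : ∀ t s : ℝ, 0 ≤ s → s ≤ t → t ≤ τ → ‖R t s‖ ≤ MR)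
    (x₀ : X)
    -- B* x* is the Riesz representative of u ↦ ⟨x*, Bu⟩
    (Bstar : StrongDual ℝ X → U)
    (hBstar : ∀ (φ : StrongDual ℝ X) (u : U), ⟪Bstar φ, u⟫ = φ (B u))
    -- the controllability Gramian B_τ
    (Btau : StrongDual ℝ X → X)
    (hBtau : ∀ φ : StrongDual ℝ X,
      Btau φ = ∫ t in Set.Icc (0:ℝ) τ, R τ t (B (Bstar (φ.comp (R τ t))))) :
    Dense {y : X | ∃ u : Lp U 2 ((volume : Measure ℝ).restrict (Set.Icc 0 τ)),
        y = R τ 0 x₀ +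
          ∫ s, R τ s (B (u s)) ∂((volume : Measure ℝ).restrict (Set.Icc 0 τ))} ↔
    ∀ φ : StrongDual ℝ X, φ ≠ 0 → 0 < φ (Btau φ) := by
  classical
  set μ : Measure ℝ := (volume : Measure ℝ).restrict (Set.Icc 0 τ) with hμdef
  haveI hfin : IsFiniteMeasure μ := by
    constructor
    rw [hμdef, Measure.restrict_apply_univ]
    simp [Real.volume_Icc]
  have hMR0 : 0 ≤ MR := le_trans (norm_nonneg (R τ τ)) (hMR τ τ hτ.le le_rfl le_rfl)
  -- continuity of s ↦ R τ s x on [0, τ]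
  have h1 : ∀ x : X, ContinuousOn (fun s => R τ s x) (Set.Icc 0 τ) := by
    intro x
    have hmaps : Set.MapsTo (fun s : ℝ => ((τ, s) : ℝ × ℝ)) (Set.Icc 0 τ)
        {p : ℝ × ℝ | 0 ≤ p.2 ∧ p.2 ≤ p.1 ∧ p.1 ≤ τ} := fun s hs => ⟨hs.1, hs.2, le_rfl⟩
    exact (hR_strong x).comp ((continuous_const.prodMk continuous_id).continuousOn) hmaps
  set g : StrongDual ℝ X → ℝ → U := fun φ t => Bstar (φ.comp (R τ t)) with hgdef
  have h2 : ∀ (φ : StrongDual ℝ X) (t : ℝ) (y : U), ⟪g φ t, y⟫ = φ (R τ t (B y)) :=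
    fun φ t y => hBstar _ y
  -- measurability of g φ
  have h3 : ∀ φ : StrongDual ℝ X, AEStronglyMeasurable (g φ) μ := by
    intro φ
    have hG : StronglyMeasurable ((Set.Icc (0:ℝ) τ).indicator (g φ)) := by
      apply aux_pettis
      intro y
      have heq : (fun t => ⟪(Set.Icc (0:ℝ) τ).indicator (g φ) t, y⟫) =
          (Set.Icc (0:ℝ) τ).indicator (fun t => φ (R τ t (B y))) := by
        ext t
        by_cases ht : t ∈ Set.Icc (0:ℝ) τ
        · rw [Set.indicator_of_mem ht, Set.indicator_of_mem ht, h2]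
        · rw [Set.indicator_of_notMem ht, Set.indicator_of_notMem ht, inner_zero_left]
      rw [heq]
      exact aux_indicator_meas measurableSet_Icc (φ.continuous.comp_continuousOn (h1 (B y)))
    refine hG.aestronglyMeasurable.congr ?_
    filter_upwards [ae_restrict_mem measurableSet_Icc] with t ht
    exact Set.indicator_of_mem ht _
  set K : StrongDual ℝ X → ℝ := fun φ => ‖φ‖ * MR * ‖B‖ with hKdef
  have hK0 : ∀ φ : StrongDual ℝ X, 0 ≤ K φ := fun φ => by positivity
  have h4 : ∀ φ : StrongDual ℝ X, ∀ t ∈ Set.Icc (0:ℝ) τ, ‖g φ t‖ ≤ K φ := by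
    intro φ t ht
    have hsq : ‖g φ t‖ ^ 2 = φ (R τ t (B (g φ t))) := by
      rw [← h2, real_inner_self_eq_norm_sq]
    have e1 : ‖R τ t (B (g φ t))‖ ≤ MR * (‖B‖ * ‖g φ t‖) := by
      calc ‖R τ t (B (g φ t))‖ ≤ ‖R τ t‖ * ‖B (g φ t)‖ := (R τ t).le_opNorm _
        _ ≤ MR * (‖B‖ * ‖g φ t‖) :=
          mul_le_mul (hMR τ t ht.1 ht.2 le_rfl) (B.le_opNorm _) (norm_nonneg _) hMR0
    have habs : φ (R τ t (B (g φ t))) ≤ ‖φ‖ * ‖R τ t (B (g φ t))‖ := by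
      calc φ (R τ t (B (g φ t))) ≤ |φ (R τ t (B (g φ t)))| := le_abs_self _
        _ = ‖φ (R τ t (B (g φ t)))‖ := (Real.norm_eq_abs _).symm
        _ ≤ ‖φ‖ * ‖R τ t (B (g φ t))‖ := φ.le_opNorm _
    have hfinal : ‖g φ t‖ ^ 2 ≤ K φ * ‖g φ t‖ := by
      calc ‖g φ t‖ ^ 2 = φ (R τ t (B (g φ t))) := hsq
        _ ≤ ‖φ‖ * ‖R τ t (B (g φ t))‖ := habs
        _ ≤ ‖φ‖ * (MR * (‖B‖ * ‖g φ t‖)) := mul_le_mul_of_nonneg_left e1 (norm_nonneg φ)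
        _ = K φ * ‖g φ t‖ := by rw [hKdef]; ring
    nlinarith [norm_nonneg (g φ t), hK0 φ]
  have h5 : ∀ φ : StrongDual ℝ X, MemLp (g φ) 2 μ := by
    intro φ
    refine MemLp.of_bound (h3 φ) (K φ) ?_
    filter_upwards [ae_restrict_mem measurableSet_Icc] with t ht
    exact h4 φ t ht
  -- integrability of s ↦ R τ s (B (f s))
  have h6 : ∀ f : ℝ → U, AEStronglyMeasurable f μ → Integrable f μ →
      Integrable (fun s => R τ s (B (f s))) μ := by
    intro f hfm hfi
    have hmeas : AEStronglyMeasurable (fun s => R τ s (B (f s))) μ :=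
      aux_apply_meas measurableSet_Icc (fun s => (R τ s).comp B) (fun y => h1 (B y)) hfm
    refine (hfi.norm.const_mul (MR * ‖B‖)).mono' hmeas ?_
    filter_upwards [ae_restrict_mem measurableSet_Icc] with s hs
    calc ‖R τ s (B (f s))‖ ≤ ‖R τ s‖ * ‖B (f s)‖ := (R τ s).le_opNorm _
      _ ≤ MR * (‖B‖ * ‖f s‖) :=
        mul_le_mul (hMR τ s hs.1 hs.2 le_rfl) (B.le_opNorm _) (norm_nonneg _) hMR0
      _ = MR * ‖B‖ * ‖f s‖ := by ring
  have hIu : ∀ u : Lp U 2 μ, Integrable (fun s => R τ s (B (u s))) μ := fun u =>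
    h6 u (Lp.aestronglyMeasurable u) ((Lp.memLp u).integrable (by norm_num))
  have h8 : ∀ (φ : StrongDual ℝ X) (u : Lp U 2 μ),
      φ (∫ s, R τ s (B (u s)) ∂μ) = ∫ s, ⟪g φ s, u s⟫ ∂μ := by
    intro φ u
    rw [← ContinuousLinearMap.integral_comp_comm φ (hIu u)]
    exact (integral_congr_ae (Filter.Eventually.of_forall fun s => (h2 φ s (u s)))).symm
  have h9 : ∀ φ : StrongDual ℝ X, φ (Btau φ) = ∫ t, ‖g φ t‖ ^ 2 ∂μ := by
    intro φ
    have hInt : Integrable (fun t => R τ t (B (g φ t))) μ :=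
      h6 (g φ) (h3 φ) ((h5 φ).integrable (by norm_num))
    rw [hBtau φ, ← ContinuousLinearMap.integral_comp_comm φ hInt]
    refine integral_congr_ae (Filter.Eventually.of_forall fun t => ?_)
    show φ (R τ t (B (g φ t))) = ‖g φ t‖ ^ 2
    rw [← real_inner_self_eq_norm_sq, h2]
  have h10sq_int : ∀ φ : StrongDual ℝ X, Integrable (fun t => ‖g φ t‖ ^ 2) μ := by
    intro φ
    have hm : AEStronglyMeasurable (fun t => ‖g φ t‖ ^ 2) μ := by
      have := (h3 φ).norm.mul (h3 φ).norm
      simpa [pow_two, Pi.mul_def] using this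
    refine (integrable_const ((K φ) ^ 2)).mono' hm ?_
    filter_upwards [ae_restrict_mem measurableSet_Icc] with t ht
    rw [Real.norm_eq_abs, abs_of_nonneg (sq_nonneg _)]
    exact pow_le_pow_left₀ (norm_nonneg _) (h4 φ t ht) 2
  have h10 : ∀ φ : StrongDual ℝ X, (∫ t, ‖g φ t‖ ^ 2 ∂μ) = 0 ↔ g φ =ᵐ[μ] 0 := by
    intro φ
    rw [integral_eq_zero_iff_of_nonneg (fun t => sq_nonneg _) (h10sq_int φ)]
    constructor
    · intro h
      filter_upwards [h] with t ht
      have ht' : ‖g φ t‖ ^ 2 = 0 := ht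
      have : ‖g φ t‖ = 0 := by nlinarith [norm_nonneg (g φ t)]
      simpa [norm_eq_zero] using this
    · intro h
      filter_upwards [h] with t ht
      have ht' : g φ t = 0 := ht
      simp [ht']
  -- the reachable set from 0
  set W : Set X := {y : X | ∃ u : Lp U 2 μ, y = ∫ s, R τ s (B (u s)) ∂μ} with hWdef
  set c : X := R τ 0 x₀ with hcdef
  have hSW : {y : X | ∃ u : Lp U 2 μ, y = c + ∫ s, R τ s (B (u s)) ∂μ} =
      (fun w => c + w) '' W := by
    ext y
    constructor
    · rintro ⟨u, rfl⟩
      exact ⟨_, ⟨u, rfl⟩, rfl⟩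
    · rintro ⟨w, ⟨u, rfl⟩, rfl⟩
      exact ⟨u, rfl⟩
  have hdense_image : ∀ (b : X) (s : Set X), Dense s → Dense ((fun w => b + w) '' s) := by
    intro b s hs
    have hsurj : Function.Surjective (fun w : X => b + w) := fun y =>
      ⟨y - b, by simp⟩
    exact (hsurj.denseRange).dense_image (continuous_const.add continuous_id) hs
  have hdense_iff : Dense ((fun w => c + w) '' W) ↔ Dense W := by
    constructor
    · intro h
      have h2 := hdense_image (-c) _ h
      have himg : (fun w => -c + w) '' ((fun w => c + w) '' W) = W := by
        rw [← Set.image_comp]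
        have : ((fun w : X => -c + w) ∘ fun w => c + w) = id := by
          ext w
          simp [Function.comp]
        rw [this, Set.image_id]
      rwa [himg] at h2
    · exact hdense_image c W
  -- basic algebra of W
  have hI0 : (∫ s, R τ s (B ((0 : Lp U 2 μ) s)) ∂μ) = 0 := by
    have hae : (fun s => R τ s (B ((0 : Lp U 2 μ) s))) =ᵐ[μ] fun _ => (0 : X) := by
      filter_upwards [Lp.coeFn_zero U 2 μ] with s hs
      rw [hs]
      simp
    rw [integral_congr_ae hae, integral_zero]
  have hIadd : ∀ u v : Lp U 2 μ, (∫ s, R τ s (B ((u + v) s)) ∂μ) =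
      (∫ s, R τ s (B (u s)) ∂μ) + ∫ s, R τ s (B (v s)) ∂μ := by
    intro u v
    rw [← integral_add (hIu u) (hIu v)]
    apply integral_congr_ae
    filter_upwards [Lp.coeFn_add u v] with s hs
    rw [hs]
    simp [map_add]
  have hIsmul : ∀ (r : ℝ) (u : Lp U 2 μ), (∫ s, R τ s (B ((r • u) s)) ∂μ) =
      r • ∫ s, R τ s (B (u s)) ∂μ := by
    intro r u
    rw [← integral_smul]
    apply integral_congr_ae
    filter_upwards [Lp.coeFn_smul r u] with s hs
    rw [hs]
    simp [_root_.map_smul]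
  have hW0 : (0 : X) ∈ W := ⟨0, hI0.symm⟩
  have hWadd : ∀ x ∈ W, ∀ y ∈ W, x + y ∈ W := by
    rintro x ⟨u, rfl⟩ y ⟨v, rfl⟩
    exact ⟨u + v, (hIadd u v).symm⟩
  have hWsmul : ∀ (r : ℝ), ∀ x ∈ W, r • x ∈ W := by
    rintro r x ⟨u, rfl⟩
    exact ⟨r • u, (hIsmul r u).symm⟩
  have hWconv : Convex ℝ W := fun x hx y hy a b _ _ _ =>
    hWadd _ (hWsmul a x hx) _ (hWsmul b y hy)
  rw [hSW, hdense_iff]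
  constructor
  · -- density implies positivity
    intro hW φ hφ
    have hex : ∃ u : Lp U 2 μ, φ (∫ s, R τ s (B (u s)) ∂μ) ≠ 0 := by
      by_contra hall
      push_neg at hall
      have hzero : Set.EqOn (⇑φ) (fun _ => (0:ℝ)) W := by
        rintro w ⟨u, rfl⟩
        exact hall u
      have hfun : (⇑φ : X → ℝ) = fun _ => 0 :=
        Continuous.ext_on hW φ.continuous continuous_const hzero
      apply hφ
      ext x
      simpa using congrFun hfun x
    obtain ⟨u, hu⟩ := hex
    have hgne : ¬ (g φ =ᵐ[μ] 0) := by
      intro hg0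
      apply hu
      rw [h8 φ u]
      have hae : (fun s => ⟪g φ s, u s⟫) =ᵐ[μ] fun _ => (0:ℝ) := by
        filter_upwards [hg0] with s hs
        have hs' : g φ s = 0 := hs
        rw [hs']
        exact inner_zero_left _
      rw [integral_congr_ae hae, integral_zero]
    have hne : φ (Btau φ) ≠ 0 := by
      rw [h9]
      exact fun h => hgne ((h10 φ).1 h)
    have hge : 0 ≤ φ (Btau φ) := by
      rw [h9]
      exact integral_nonneg fun t => sq_nonneg _
    exact lt_of_le_of_ne hge (Ne.symm hne)
  · -- positivity implies density
    intro hpos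
    by_contra hnd
    have hx : ∃ x : X, x ∉ closure W := by
      by_contra hall
      push_neg at hall
      exact hnd hall
    obtain ⟨x, hx⟩ := hx
    obtain ⟨f, cc, hfc, hcx⟩ :=
      geometric_hahn_banach_closed_point (hWconv.closure) isClosed_closure hx
    have hf0 : ∀ w ∈ W, f w = 0 := by
      intro w hw
      by_contra hne
      have hr : ∀ r : ℝ, r * f w < cc := by
        intro r
        have := hfc _ (subset_closure (hWsmul r w hw))
        simpa [_root_.map_smul, smul_eq_mul] using this
      have h1 := hr ((cc + 1) / f w)
      rw [div_mul_cancel₀ _ hne] at h1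
      linarith
    have hcpos : 0 < cc := by
      have := hfc 0 (subset_closure hW0)
      simpa using this
    have hfne : (f : StrongDual ℝ X) ≠ 0 := by
      intro h
      rw [h] at hcx
      simp at hcx
      linarith
    have hgz : (∫ t, ‖g f t‖ ^ 2 ∂μ) = 0 := by
      have hu0 := hf0 _ ⟨(h5 f).toLp (g f), rfl⟩
      rw [h8 f ((h5 f).toLp (g f))] at hu0
      rw [← hu0]
      apply integral_congr_ae
      filter_upwards [(h5 f).coeFn_toLp] with t ht
      rw [ht, real_inner_self_eq_norm_sq]
    have := hpos f hfne
    rw [h9, hgz] at this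
    exact lt_irrefl 0 this
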